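/- If (𝔢_t)_{t∈ℕ₀} is a nonnegative adapted process satisfying E_Q[𝔢_τ] ≤ 1 for all stopping times τ (an anytime-valid e-value under Q), then the process 𝔭_t := min(1, inf_{s≤t} 1/𝔢_s) is an anytime-valid p-value for Q, i.e., Q(∃ t: 𝔭_t ≤ α) ≤ α for all α ∈ [0,1]. -/

import Mathlib

open MeasureTheory Filter
open scoped ENNReal

/-- Value of the process `e` at a possibly infinite stopping time `τ`, where
`e_∞ := limsup_{t→∞} e_t`. -/
noncomputable def stopVal {Ω : Type*} (e : ℕ → Ω → ℝ) (τ : Ω → ℕ∞) (ω : Ω) : ℝ :=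
  if h : τ ω = ⊤ then Filter.limsup (fun t => e t ω) Filter.atTop
  else e ((τ ω).untop h) ω

/-- The running-minimum reciprocal `𝔭_t := min(1, inf_{s≤t} 1/𝔢_s)` (with `1/0 := ∞`,
computed in `ℝ≥0∞`). -/
noncomputable def pFromE {Ω : Type*} (e : ℕ → Ω → ℝ) (t : ℕ) (ω : Ω) : ℝ≥0∞ :=
  min 1 (⨅ s ∈ Finset.Iic t, (ENNReal.ofReal (e s ω))⁻¹)

lemma key_pFromE {Ω : Type*} (e : ℕ → Ω → ℝ) (ω : Ω) (α : ℝ≥0∞) (hα1 : α < 1) :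
    (∃ t, pFromE e t ω ≤ α) ↔ ∃ s, (ENNReal.ofReal (e s ω))⁻¹ ≤ α := by
  constructor
  · rintro ⟨t, ht⟩
    rcases min_le_iff.1 ht with h | h
    · exact absurd (h.trans_lt hα1) (lt_irrefl _)
    · rw [← Finset.inf_eq_iInf] at h
      obtain ⟨s, hs, hval⟩ := Finset.exists_mem_eq_inf (Finset.Iic t)
        ⟨0, Finset.mem_Iic.2 (Nat.zero_le t)⟩ (fun s => (ENNReal.ofReal (e s ω))⁻¹)
      exact ⟨s, hval ▸ h⟩
  · rintro ⟨s, hs⟩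
    exact ⟨s, (min_le_right _ _).trans ((iInf₂_le s (Finset.mem_Iic.2 le_rfl)).trans hs)⟩


/-- If `(𝔢_t)` is a nonnegative adapted process with `E[𝔢_τ] ≤ 1` for all (possibly
infinite) stopping times `τ` (an anytime-valid e-value), then
`𝔭_t := min(1, inf_{s≤t} 1/𝔢_s)` is an anytime-valid p-value:
`Q(∃ t, 𝔭_t ≤ α) ≤ α` for all `α ∈ [0,1]`. -/
theorem e_value_to_p_value {Ω : Type*} {m0 : MeasurableSpace Ω}
    (μ : Measure Ω) [IsProbabilityMeasure μ] (ℱ : Filtration ℕ m0)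
    (e : ℕ → Ω → ℝ) (hadp : Adapted ℱ e) (hpos : ∀ t ω, 0 ≤ e t ω)
    (hsafe : ∀ τ : Ω → ℕ∞, (∀ t : ℕ, MeasurableSet[ℱ t] {ω | τ ω ≤ (t : ℕ∞)}) →
      ∫⁻ ω, ENNReal.ofReal (stopVal e τ ω) ∂μ ≤ 1)
    (α : ℝ≥0∞) (hα : α ≤ 1) :
    μ {ω | ∃ t : ℕ, pFromE e t ω ≤ α} ≤ α := by
  rcases eq_or_lt_of_le hα with rfl | hα1
  · calc μ _ ≤ μ Set.univ := measure_mono (Set.subset_univ _)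
    _ = 1 := measure_univ
  have hset : {ω | ∃ t : ℕ, pFromE e t ω ≤ α}
      = {ω | ∃ s : ℕ, α⁻¹ ≤ ENNReal.ofReal (e s ω)} := by
    ext ω
    rw [Set.mem_setOf_eq, Set.mem_setOf_eq, key_pFromE e ω α hα1]
    constructor
    · rintro ⟨s, hs⟩
      exact ⟨s, by simpa using ENNReal.inv_le_inv.2 hs⟩
    · rintro ⟨s, hs⟩
      exact ⟨s, by simpa using ENNReal.inv_le_inv.2 hs⟩
  rw [hset]
  rcases eq_or_ne α 0 with rfl | hα0
  · have : {ω | ∃ s : ℕ, (0 : ℝ≥0∞)⁻¹ ≤ ENNReal.ofReal (e s ω)} = ∅ := by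
      ext ω
      simp only [Set.mem_setOf_eq, Set.mem_empty_iff_false, iff_false, not_exists, not_le]
      intro s
      simpa using ENNReal.ofReal_lt_top
    rw [this]; simp
  -- hitting time
  classical
  set P : ℕ → Ω → Prop := fun s ω => α⁻¹ ≤ ENNReal.ofReal (e s ω) with hP
  set τ : Ω → ℕ∞ := fun ω =>
    if h : ∃ s, P s ω then ((Nat.find h : ℕ) : ℕ∞) else ⊤ with hτ
  have hstop : ∀ t : ℕ, MeasurableSet[ℱ t] {ω | τ ω ≤ (t : ℕ∞)} := by
    intro t
    have heq : {ω | τ ω ≤ (t : ℕ∞)} = ⋃ s, ⋃ (_ : s ≤ t), {ω | P s ω} := by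
      ext ω
      simp only [Set.mem_setOf_eq, Set.mem_iUnion, hτ]
      split
      · next h =>
        rw [Nat.cast_le, Nat.find_le_iff]
        exact ⟨fun ⟨m, hm, hmp⟩ => ⟨m, hm, hmp⟩, fun ⟨m, hm, hmp⟩ => ⟨m, hm, hmp⟩⟩
      · next h =>
        simp only [top_le_iff]
        constructor
        · intro ht; exact absurd ht (by simp)
        · rintro ⟨s, _, hs⟩; exact absurd ⟨s, hs⟩ h
    rw [heq]
    refine MeasurableSet.iUnion fun s => MeasurableSet.iUnion fun hs => ?_
    have : MeasurableSet[ℱ s] {ω | P s ω} := by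
      have hm := (hadp s)
      have : {ω | P s ω} = (fun ω => e s ω) ⁻¹' Set.Ici α⁻¹.toReal := by
        ext ω
        simp only [Set.mem_setOf_eq, Set.mem_preimage, Set.mem_Ici, hP]
        rw [ENNReal.le_ofReal_iff_toReal_le (by simp [hα0]) (hpos s ω)]
      rw [this]
      exact hm measurableSet_Ici
    exact ℱ.mono hs _ this
  have hint := hsafe τ hstop
  have hαtop : α ≠ ⊤ := (hα1.trans_le le_top).ne
  set E : Set Ω := {ω | ∃ s : ℕ, α⁻¹ ≤ ENNReal.ofReal (e s ω)} with hE
  have hEmeas : MeasurableSet E := by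
    have : E = ⋃ s, (fun ω => e s ω) ⁻¹' Set.Ici α⁻¹.toReal := by
      ext ω
      simp only [hE, Set.mem_setOf_eq, Set.mem_iUnion, Set.mem_preimage, Set.mem_Ici]
      refine exists_congr fun s => ?_
      rw [ENNReal.le_ofReal_iff_toReal_le (by simp [hα0]) (hpos s ω)]
    rw [this]
    exact MeasurableSet.iUnion fun s => (ℱ.le s _ ((hadp s) measurableSet_Ici))
  have hbound : ∀ ω, E.indicator (fun _ => α⁻¹) ω ≤ ENNReal.ofReal (stopVal e τ ω) := by
    intro ω
    by_cases hω : ω ∈ E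
    · rw [Set.indicator_of_mem hω]
      have h : ∃ s, P s ω := hω
      have hτω : τ ω = ((Nat.find h : ℕ) : ℕ∞) := by
        simp only [hτ]; rw [dif_pos h]
      have hne : τ ω ≠ ⊤ := by rw [hτω]; exact WithTop.coe_ne_top
      rw [stopVal, dif_neg hne]
      have huntop : (τ ω).untop hne = Nat.find h := by
        have h2 := WithTop.coe_untop (τ ω) hne
        exact WithTop.coe_inj.mp (h2.trans hτω)
      rw [huntop]
      exact Nat.find_spec h
    · rw [Set.indicator_of_notMem hω]; exact zero_le
  have hmarkov : α⁻¹ * μ E ≤ 1 := by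
    calc α⁻¹ * μ E = ∫⁻ ω, E.indicator (fun _ => α⁻¹) ω ∂μ := by
          rw [lintegral_indicator_const hEmeas]
      _ ≤ ∫⁻ ω, ENNReal.ofReal (stopVal e τ ω) ∂μ := lintegral_mono hbound
      _ ≤ 1 := hint
  calc μ E = α * (α⁻¹ * μ E) := by
        rw [← mul_assoc, ENNReal.mul_inv_cancel hα0 hαtop, one_mul]
    _ ≤ α * 1 := mul_le_mul_right hmarkov α
    _ = α := mul_one α
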